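/- arXiv:2003.07821 — 2 statements merged into one kernel-verified Lean document; each statement's English description precedes it below -/
import Mathlib

section
/- For each ℓ ∈ P and m ∈ 𝓜, the quantity 1 − π^(ℓ,m)(ε) is O(ε): there exists a finite constant K, independent of ε, such that 1 − π^(ℓ,m)(ε) ≤ K·ε for all ε ∈ (0,1). -/
open MeasureTheory ProbabilityTheory Pointwise
open scoped RealInnerProductSpace

noncomputable section

/-- The capacity region `𝒞 = ∑_m ψ_m · ConvexHull(𝒮^m)` (Minkowski sum). -/
def capacityRegion {n : ℕ} {M : Type} [Fintype M] (ψ : M → ℝ)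
    (S : M → Finset (EuclideanSpace ℝ (Fin n))) : Set (EuclideanSpace ℝ (Fin n)) :=
  ∑ m : M, ψ m • (convexHull ℝ (↑(S m) : Set (EuclideanSpace ℝ (Fin n))))

/-- `b^(ℓ,m) = max_{x ∈ 𝒮^m} ⟪c^(ℓ), x⟫`. -/
def maxRate {n : ℕ} {M : Type} (S : M → Finset (EuclideanSpace ℝ (Fin n)))
    (hSne : ∀ m, (S m).Nonempty) (cvec : EuclideanSpace ℝ (Fin n)) (m : M) : ℝ :=
  (S m).sup' (hSne m) fun x => ⟪cvec, x⟫

/-- for every `ℓ ∈ P` and `m ∈ 𝓜`, the conditional probability that the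
MaxWeight schedule does not achieve the maximal `c^(ℓ)`-weighted rate given channel state `m`
is `O(ε)`, with a constant independent of `ε`. -/
theorem generalized_switch_schedule_prob_O_eps
    -- fixed data of the generalized switch
    (n : ℕ) (hn : 0 < n)
    (M : Type) [Fintype M] [Nonempty M] [MeasurableSpace M] [MeasurableSingletonClass M]
    (ψ : M → ℝ) (hψpos : ∀ m, 0 < ψ m) (hψsum : ∑ m, ψ m = 1)
    (Amax Smax : ℝ)
    (S : M → Finset (EuclideanSpace ℝ (Fin n)))
    (hSne : ∀ m, (S m).Nonempty)
    (hSnonneg : ∀ m, ∀ x ∈ S m, ∀ i, 0 ≤ x i)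
    (hSbdd : ∀ m, ∀ x ∈ S m, ∀ i, x i ≤ Smax)
    (hSproj : ∀ m, ∀ x ∈ S m, ∀ T : Finset (Fin n),
      (WithLp.toLp 2 (fun i => if i ∈ T then x i else 0) : EuclideanSpace ℝ (Fin n)) ∈ S m)
    -- the capacity region as an intersection of half spaces
    (L : ℕ) (c : Fin L → EuclideanSpace ℝ (Fin n)) (b : Fin L → ℝ)
    (hcnonneg : ∀ ℓ i, 0 ≤ c ℓ i) (hcnorm : ∀ ℓ, ‖c ℓ‖ = 1) (hbpos : ∀ ℓ, 0 < b ℓ)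
    (hcap : capacityRegion ψ S
      = {x : EuclideanSpace ℝ (Fin n) | (∀ i, 0 ≤ x i) ∧ ∀ ℓ, ⟪c ℓ, x⟫ ≤ b ℓ})
    -- the heavy-traffic direction ν on the boundary, and the set P of tight constraints
    (ν : EuclideanSpace ℝ (Fin n)) (hν : ν ∈ capacityRegion ψ S)
    (P : Finset (Fin L)) (hPmem : ∀ ℓ, ℓ ∈ P ↔ ⟪c ℓ, ν⟫ = b ℓ) (hPne : P.Nonempty)
    -- a MaxWeight schedule
    (sched : EuclideanSpace ℝ (Fin n) → M → EuclideanSpace ℝ (Fin n))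
    (hsched_meas : Measurable (fun p : EuclideanSpace ℝ (Fin n) × M => sched p.1 p.2))
    (hsched_mem : ∀ q m, sched q m ∈ S m)
    (hsched_max : ∀ q m, ∀ x ∈ S m, ⟪q, x⟫ ≤ ⟪q, sched q m⟫) :
    -- conclusion
    ∀ ℓ ∈ P, ∀ m : M, ∃ K : ℝ,
      ∀ ε : ℝ, 0 < ε → ε < 1 →
      ∀ (Ω : Type) [MeasureSpace Ω], IsProbabilityMeasure (ℙ : Measure Ω) →
      ∀ (a : Ω → EuclideanSpace ℝ (Fin n)) (Mc : Ω → M)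
        (q qp : Ω → EuclideanSpace ℝ (Fin n)),
        Measurable a → Measurable Mc → Measurable q →
        (∀ ω i, a ω i ∈ Set.Icc (0:ℝ) Amax) →
        (∀ i, (∫ ω, a ω i) = (1 - ε) * ν i) →
        (∀ m', (ℙ : Measure Ω) {ω | Mc ω = m'} = ENNReal.ofReal (ψ m')) →
        IndepFun (fun ω => (a ω, Mc ω)) q ℙ →
        (∀ ω i, 0 ≤ q ω i) →
        Integrable (fun ω => ‖q ω‖ ^ 2) →
        (∀ ω i, qp ω i = max (q ω i + a ω i - sched (q ω) (Mc ω) i) 0) →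
        Measure.map qp ℙ = Measure.map q ℙ →
        -- 1 − π^(ℓ,m)(ε) ≤ K·ε, where π^(ℓ,m)(ε) is a conditional probability
        1 - ((ProbabilityTheory.cond (ℙ : Measure Ω) {ω | Mc ω = m})
              {ω | ⟪c ℓ, sched (q ω) (Mc ω)⟫ = maxRate S hSne (c ℓ) m}).toReal
          ≤ K * ε := by
  intro ℓ hℓ m
  classical
  set B : M → ℝ := maxRate S hSne (c ℓ) with hBdef
  have hinner : ∀ x y : EuclideanSpace ℝ (Fin n), ⟪x, y⟫ = ∑ i, x i * y i := by
    intro x y; simp [PiLp.inner_apply, RCLike.inner_apply]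
    exact Finset.sum_congr rfl fun _ _ => mul_comm _ _
  have hBle : ∀ m', ∀ x ∈ S m', ⟪c ℓ, x⟫ ≤ B m' := by
    intro m' x hx; exact Finset.le_sup' _ hx
  have hbν : ⟪c ℓ, ν⟫ = b ℓ := (hPmem ℓ).1 hℓ
  -- choose maximizers
  choose xm hxm hxB using fun m' => Finset.exists_mem_eq_sup' (hSne m') (fun x => ⟪c ℓ, x⟫)
  -- uniform bound on |⟪c ℓ, x⟫| over all rate vectors
  obtain ⟨Cs, hCs⟩ : ∃ Cs : ℝ, ∀ m', ∀ x ∈ S m', |⟪c ℓ, x⟫| ≤ Cs := by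
    refine ⟨Finset.univ.sup' Finset.univ_nonempty
      (fun m' => (S m').sup' (hSne m') fun x => |⟪c ℓ, x⟫|), fun m' x hx => ?_⟩
    exact le_trans (Finset.le_sup' (f := fun x => |⟪c ℓ, x⟫|) hx)
      (Finset.le_sup' (f := fun m' => (S m').sup' (hSne m') fun x => |⟪c ℓ, x⟫|) (Finset.mem_univ m'))
  have hBabs : ∀ m', |B m'| ≤ Cs := by
    intro m'
    have : B m' = ⟪c ℓ, xm m'⟫ := hxB m'
    rw [this]; exact hCs m' _ (hxm m')
  -- the sum of the per-state maxima equals b ℓ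
  have hsumB : ∑ m', ψ m' * B m' = b ℓ := by
    have hub : ∀ m', ∀ y ∈ convexHull ℝ ((S m' : Set (EuclideanSpace ℝ (Fin n)))),
        ⟪c ℓ, y⟫ ≤ B m' := by
      intro m'
      have hconv : Convex ℝ {x : EuclideanSpace ℝ (Fin n) | ⟪c ℓ, x⟫ ≤ B m'} :=
        convex_halfSpace_le
          ⟨fun u v => inner_add_right _ _ _, fun r u => real_inner_smul_right _ _ _⟩ _
      exact fun y hy => convexHull_min (fun x hx => hBle m' x hx) hconv hy
    have hge : b ℓ ≤ ∑ m', ψ m' * B m' := by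
      rw [← hbν]
      rw [capacityRegion] at hν
      obtain ⟨g, hg, hgsum⟩ := (Set.mem_fintype_sum _ _).1 hν
      rw [← hgsum, inner_sum]
      refine Finset.sum_le_sum fun m' _ => ?_
      obtain ⟨y, hy, hyeq⟩ := hg m'
      rw [← hyeq, real_inner_smul_right]
      exact mul_le_mul_of_nonneg_left (hub m' y hy) (hψpos m').le
    have hle : ∑ m', ψ m' * B m' ≤ b ℓ := by
      have hmem : (∑ m', ψ m' • xm m') ∈ capacityRegion ψ S := by
        rw [capacityRegion]
        exact Set.finset_sum_mem_finset_sum _ _ _ fun m' _ =>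
          Set.smul_mem_smul_set (subset_convexHull ℝ _ (hxm m'))
      rw [hcap] at hmem
      have h2 := hmem.2 ℓ
      rw [inner_sum] at h2
      calc ∑ m', ψ m' * B m' = ∑ m', ⟪c ℓ, ψ m' • xm m'⟫ := by
            refine Finset.sum_congr rfl fun m' _ => ?_
            have hBx : B m' = ⟪c ℓ, xm m'⟫ := hxB m'
            rw [real_inner_smul_right, hBx]
        _ ≤ b ℓ := h2
    linarith
  -- the gap δ
  obtain ⟨δ, hδpos, hδgap⟩ : ∃ δ : ℝ, 0 < δ ∧
      ∀ x ∈ S m, ⟪c ℓ, x⟫ ≠ B m → ⟪c ℓ, x⟫ ≤ B m - δ := by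
    by_cases hT : ((S m).filter (fun x => ⟪c ℓ, x⟫ < B m)).Nonempty
    · refine ⟨B m - ((S m).filter (fun x => ⟪c ℓ, x⟫ < B m)).sup' hT (fun x => ⟪c ℓ, x⟫),
        ?_, ?_⟩
      · have hlt : ((S m).filter (fun x => ⟪c ℓ, x⟫ < B m)).sup' hT (fun x => ⟪c ℓ, x⟫) < B m := by
          rw [Finset.sup'_lt_iff]
          exact fun x hx => (Finset.mem_filter.1 hx).2
        linarith
      · intro x hx hne
        have hxlt : ⟪c ℓ, x⟫ < B m := lt_of_le_of_ne (hBle m x hx) hne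
        have hmemT : x ∈ (S m).filter (fun x => ⟪c ℓ, x⟫ < B m) :=
          Finset.mem_filter.2 ⟨hx, hxlt⟩
        have := Finset.le_sup' (f := fun x => ⟪c ℓ, x⟫) hmemT
        linarith
    · refine ⟨1, one_pos, fun x hx hne => ?_⟩
      exact absurd ⟨x, Finset.mem_filter.2 ⟨hx, lt_of_le_of_ne (hBle m x hx) hne⟩⟩ hT
  refine ⟨b ℓ / (δ * ψ m), ?_⟩
  intro ε hε hε1 Ω _ hPM a Mc q qp ha hMc hq haIcc haMean hMcLaw hIndep hqnn hqInt hqp hstat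
  haveI := hPM
  -- measurability of the schedule process
  have hs_meas : Measurable (fun ω => sched (q ω) (Mc ω)) := hsched_meas.comp (hq.prodMk hMc)
  have hcont : Continuous fun x : EuclideanSpace ℝ (Fin n) => ⟪c ℓ, x⟫ :=
    Continuous.inner continuous_const continuous_id
  have hfs : Measurable fun ω => ⟪c ℓ, sched (q ω) (Mc ω)⟫ := hcont.measurable.comp hs_meas
  -- bounded measurable functions are integrable
  have hbint : ∀ (f : Ω → ℝ) (C : ℝ), Measurable f → (∀ ω, |f ω| ≤ C) → Integrable f ℙ := by
    intro f C hf hC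
    exact (integrable_const C).mono' hf.aestronglyMeasurable
      (ae_of_all _ fun ω => by simpa [Real.norm_eq_abs] using hC ω)
  -- integrability facts
  have hIq : Integrable (fun ω => ⟪c ℓ, q ω⟫) ℙ := by
    have h1 : Integrable (fun ω => 1 + ‖q ω‖ ^ 2) ℙ := (integrable_const 1).add hqInt
    refine h1.mono' (hcont.measurable.comp hq).aestronglyMeasurable (ae_of_all _ fun ω => ?_)
    have h2 : |⟪c ℓ, q ω⟫| ≤ ‖q ω‖ := by
      have := abs_real_inner_le_norm (c ℓ) (q ω)
      rwa [hcnorm ℓ, one_mul] at this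
    have h3 : ‖q ω‖ ≤ 1 + ‖q ω‖ ^ 2 := by nlinarith [norm_nonneg (q ω)]
    rw [Real.norm_eq_abs]; linarith
  have hIs : Integrable (fun ω => ⟪c ℓ, sched (q ω) (Mc ω)⟫) ℙ :=
    hbint _ Cs hfs fun ω => hCs _ _ (hsched_mem _ _)
  have haInt : ∀ i, Integrable (fun ω => a ω i) ℙ := by
    intro i
    refine hbint _ |Amax| ((measurable_pi_apply i).comp ((WithLp.measurable_ofLp 2 _).comp ha)) fun ω => ?_
    obtain ⟨h0, h1⟩ := haIcc ω i
    exact abs_le.2 ⟨by linarith [abs_nonneg Amax], h1.trans (le_abs_self Amax)⟩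
  have hIa : Integrable (fun ω => ⟪c ℓ, a ω⟫) ℙ := by
    have heq : (fun ω => ⟪c ℓ, a ω⟫) = fun ω => ∑ i, c ℓ i * a ω i :=
      funext fun ω => hinner _ _
    rw [heq]
    exact integrable_finset_sum _ fun i _ => (haInt i).const_mul _
  -- mean of the arrival inner product
  have haMeanInner : ∫ ω, ⟪c ℓ, a ω⟫ = (1 - ε) * b ℓ := by
    have heq : (fun ω => ⟪c ℓ, a ω⟫) = fun ω => ∑ i, c ℓ i * a ω i :=
      funext fun ω => hinner _ _
    rw [heq, integral_finset_sum _ fun i _ => (haInt i).const_mul _]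
    have hstep : ∀ i : Fin n, ∫ ω, c ℓ i * a ω i = c ℓ i * ((1 - ε) * ν i) := by
      intro i; rw [integral_const_mul, haMean i]
    rw [Finset.sum_congr rfl fun i _ => hstep i, ← hbν, hinner, Finset.mul_sum]
    exact Finset.sum_congr rfl fun i _ => by ring
  -- qp is measurable
  have hqpfun : qp = fun ω =>
      (WithLp.toLp 2 (fun i => max (q ω i + a ω i - sched (q ω) (Mc ω) i) 0) : EuclideanSpace ℝ (Fin n)) :=
    funext fun ω => by ext i; exact hqp ω i
  have hqpm : Measurable qp := by
    rw [hqpfun]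
    refine (WithLp.measurable_toLp 2 _).comp (measurable_pi_iff.2 fun i => ?_)
    exact ((((measurable_pi_apply i).comp ((WithLp.measurable_ofLp 2 _).comp hq)).add ((measurable_pi_apply i).comp ((WithLp.measurable_ofLp 2 _).comp ha))).sub
      ((measurable_pi_apply i).comp ((WithLp.measurable_ofLp 2 _).comp hs_meas))).max measurable_const
  -- equality of means by stationarity
  have hmapq : Integrable (fun x : EuclideanSpace ℝ (Fin n) => ⟪c ℓ, x⟫) (Measure.map q ℙ) :=
    (integrable_map_measure hcont.aestronglyMeasurable hq.aemeasurable).2 hIq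
  have hIqp : Integrable (fun ω => ⟪c ℓ, qp ω⟫) ℙ :=
    (integrable_map_measure hcont.aestronglyMeasurable hqpm.aemeasurable).1
      (by rw [hstat]; exact hmapq)
  have hEq : ∫ ω, ⟪c ℓ, qp ω⟫ = ∫ ω, ⟪c ℓ, q ω⟫ := by
    have h1 := integral_map (μ := ℙ) hqpm.aemeasurable hcont.aestronglyMeasurable
      (f := fun x : EuclideanSpace ℝ (Fin n) => ⟪c ℓ, x⟫)
    have h2 := integral_map (μ := ℙ) hq.aemeasurable hcont.aestronglyMeasurable
      (f := fun x : EuclideanSpace ℝ (Fin n) => ⟪c ℓ, x⟫)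
    rw [← h1, hstat, h2]
  -- pointwise drift inequality
  have hpt : ∀ ω, ⟪c ℓ, q ω⟫ + ⟪c ℓ, a ω⟫ - ⟪c ℓ, sched (q ω) (Mc ω)⟫ ≤ ⟪c ℓ, qp ω⟫ := by
    intro ω
    rw [hinner, hinner, hinner, hinner, ← Finset.sum_add_distrib, ← Finset.sum_sub_distrib]
    refine Finset.sum_le_sum fun i _ => ?_
    rw [hqp ω i]
    have h1 := mul_le_mul_of_nonneg_left
      (le_max_left (q ω i + a ω i - sched (q ω) (Mc ω) i) 0) (hcnonneg ℓ i)
    nlinarith [h1]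
  -- lower bound on the mean service
  have hCineq : (1 - ε) * b ℓ ≤ ∫ ω, ⟪c ℓ, sched (q ω) (Mc ω)⟫ := by
    have hmono := integral_mono ((hIq.add hIa).sub hIs) hIqp hpt
    simp only [Pi.add_apply, Pi.sub_apply] at hmono
    have hIqa : Integrable (fun ω => ⟪c ℓ, q ω⟫ + ⟪c ℓ, a ω⟫) ℙ := hIq.add hIa
    rw [hEq, integral_sub hIqa hIs, integral_add hIq hIa, haMeanInner] at hmono
    linarith
  -- events
  have hE1 : MeasurableSet {ω | Mc ω = m} := hMc (measurableSet_singleton m)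
  have hA : MeasurableSet {ω | ⟪c ℓ, sched (q ω) (Mc ω)⟫ = B m} :=
    hfs (measurableSet_singleton (B m))
  set bad : Set Ω := {ω | Mc ω = m} \ {ω | ⟪c ℓ, sched (q ω) (Mc ω)⟫ = B m} with hbaddef
  have hbad : MeasurableSet bad := hE1.diff hA
  -- upper bound on the mean service
  have hDineq : ∫ ω, ⟪c ℓ, sched (q ω) (Mc ω)⟫ ≤ b ℓ - δ * (ℙ bad).toReal := by
    have hMS : ∀ m' : M, MeasurableSet {ω | Mc ω = m'} := fun m' =>
      hMc (measurableSet_singleton m')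
    have hIB : Integrable (fun ω => B (Mc ω)) ℙ :=
      hbint _ Cs ((measurable_of_countable B).comp hMc) fun ω => hBabs (Mc ω)
    have hIind : Integrable (bad.indicator fun _ => (1 : ℝ)) ℙ :=
      (integrable_const 1).indicator hbad
    have hgpt : ∀ ω, ⟪c ℓ, sched (q ω) (Mc ω)⟫ ≤
        B (Mc ω) - δ * bad.indicator (fun _ => (1 : ℝ)) ω := by
      intro ω
      by_cases hω : ω ∈ bad
      · rw [Set.indicator_of_mem hω]
        obtain ⟨h1, h2⟩ := hω
        have h1' : Mc ω = m := h1
        have h2' : ⟪c ℓ, sched (q ω) (Mc ω)⟫ ≠ B m := h2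
        have hmemS : sched (q ω) (Mc ω) ∈ S m := by rw [h1']; exact hsched_mem _ _
        have hgap := hδgap _ hmemS h2'
        have hBeq : B (Mc ω) = B m := by rw [h1']
        linarith
      · rw [Set.indicator_of_notMem hω]
        have := hBle (Mc ω) _ (hsched_mem (q ω) (Mc ω))
        linarith
    have hmono := integral_mono hIs (hIB.sub (hIind.const_mul δ)) hgpt
    simp only [Pi.add_apply, Pi.sub_apply] at hmono
    have hIBval : ∫ ω, B (Mc ω) = b ℓ := by
      have h1 : (fun ω => B (Mc ω)) =
          fun ω => ∑ m', Set.indicator {ω | Mc ω = m'} (fun _ => B m') ω := by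
        funext ω
        rw [Finset.sum_eq_single (Mc ω)]
        · rw [Set.indicator_of_mem (by exact rfl)]
        · intro m' _ hne
          exact Set.indicator_of_notMem (fun h : Mc ω = m' => hne h.symm) _
        · intro h; exact absurd (Finset.mem_univ _) h
      have hIind2 : ∀ m' : M,
          Integrable (fun ω => Set.indicator {ω | Mc ω = m'} (fun _ => B m') ω) ℙ := fun m' =>
        (integrable_const (B m')).indicator (hMS m')
      rw [h1, integral_finset_sum _ fun m' _ => hIind2 m']
      have h3 : ∀ m' : M, ∫ ω, Set.indicator {ω | Mc ω = m'} (fun _ => B m') ω = ψ m' * B m' := by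
        intro m'
        rw [integral_indicator_const _ (hMS m'), measureReal_def, hMcLaw m',
          ENNReal.toReal_ofReal (hψpos m').le, smul_eq_mul]
      rw [Finset.sum_congr rfl fun m' _ => h3 m', hsumB]
    have hIind' : Integrable (fun ω => δ * bad.indicator (fun _ => (1:ℝ)) ω) ℙ :=
      hIind.const_mul δ
    rw [integral_sub hIB hIind', integral_const_mul,
      integral_indicator_const _ hbad, hIBval, smul_eq_mul, mul_one] at hmono
    exact hmono
  -- conclude
  have hψm := hψpos m
  have hp2 : (ℙ bad).toReal ≤ ε * b ℓ / δ := by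
    rw [le_div_iff₀ hδpos]
    nlinarith [hCineq, hDineq]
  have hfinA : ℙ ({ω | Mc ω = m} ∩ {ω | ⟪c ℓ, sched (q ω) (Mc ω)⟫ = B m}) ≠ ⊤ :=
    (measure_lt_top _ _).ne
  have hfinbad : ℙ bad ≠ ⊤ := (measure_lt_top _ _).ne
  have hsplit : ℙ ({ω | Mc ω = m} ∩ {ω | ⟪c ℓ, sched (q ω) (Mc ω)⟫ = B m}) + ℙ bad
      = ℙ {ω | Mc ω = m} := measure_inter_add_diff _ hA
  have htot : (ℙ ({ω | Mc ω = m} ∩ {ω | ⟪c ℓ, sched (q ω) (Mc ω)⟫ = B m})).toReal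
      + (ℙ bad).toReal = ψ m := by
    rw [← ENNReal.toReal_add hfinA hfinbad, hsplit, hMcLaw m,
      ENNReal.toReal_ofReal hψm.le]
  have hcondval : ((ProbabilityTheory.cond (ℙ : Measure Ω) {ω | Mc ω = m})
      {ω | ⟪c ℓ, sched (q ω) (Mc ω)⟫ = B m}).toReal
      = (ℙ ({ω | Mc ω = m} ∩ {ω | ⟪c ℓ, sched (q ω) (Mc ω)⟫ = B m})).toReal / ψ m := by
    rw [cond_apply hE1, ENNReal.toReal_mul, ENNReal.toReal_inv, hMcLaw m,
      ENNReal.toReal_ofReal hψm.le, inv_mul_eq_div]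
  rw [hcondval]
  have hgoal : 1 - (ℙ ({ω | Mc ω = m} ∩ {ω | ⟪c ℓ, sched (q ω) (Mc ω)⟫ = B m})).toReal / ψ m
      = (ℙ bad).toReal / ψ m := by
    have hdiv : (ℙ ({ω | Mc ω = m} ∩ {ω | ⟪c ℓ, sched (q ω) (Mc ω)⟫ = B m})).toReal / ψ m
        + (ℙ bad).toReal / ψ m = 1 := by
      rw [← add_div, htot, div_self (ne_of_gt hψm)]
    linarith
  rw [hgoal, div_le_iff₀ hψm]
  have : b ℓ / (δ * ψ m) * ε * ψ m = ε * b ℓ / δ := by field_simp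
  rw [this]
  exact hp2

end
end

section
/- For all real numbers A ≥ 0 and B ≥ 0 and every positive integer r: (A^r + B^r·r!)^{1/r} ≤ (A + B) · e^{(1/r) − 1} · r^{1 + 1/(2r)}. -/
lemma log_one_sub_ge (x : ℝ) (hx : 0 ≤ x) (hx1 : x < 1) :
    x + x^2/2 + x^3/3 ≤ -Real.log (1 - x) := by
  have h := Real.hasSum_pow_div_log_of_abs_lt_one (x := x) (by rw [abs_of_nonneg hx]; exact hx1)
  have := sum_le_hasSum (Finset.range 3) (fun i _ => by positivity) h
  simp only [Finset.sum_range_succ, Finset.sum_range_zero] at this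
  norm_num at this
  exact this

lemma key_ineq (n : ℕ) (hn : 1 ≤ n) :
    1 ≤ ((n:ℝ) + 1/2) * Real.log (((n:ℝ)+1)/n) := by
  have hn0 : (0:ℝ) < n := by exact_mod_cast hn
  have hn1 : (1:ℝ) ≤ n := by exact_mod_cast hn
  have hx : (0:ℝ) < (n:ℝ) + 1 := by linarith
  set x : ℝ := 1/((n:ℝ)+1) with hxdef
  have hx0 : 0 ≤ x := by positivity
  have hx1 : x < 1 := by rw [hxdef, div_lt_one hx]; linarith
  have h1 : (1:ℝ) - x = (n:ℝ)/((n:ℝ)+1) := by rw [hxdef]; field_simp; ring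
  have h2 : Real.log (((n:ℝ)+1)/n) = -Real.log (1 - x) := by
    rw [h1, ← Real.log_inv]
    congr 1
    field_simp
  rw [h2]
  have hlog := log_one_sub_ge x hx0 hx1
  have h3 : 1 ≤ ((n:ℝ) + 1/2) * (x + x^2/2 + x^3/3) := by
    have expand : ((n:ℝ) + 1/2) * (x + x^2/2 + x^3/3) - 1
        = ((n:ℝ) - 1) / (12 * ((n:ℝ)+1)^3) := by
      rw [hxdef]; field_simp; ring
    nlinarith [div_nonneg (by linarith : (0:ℝ) ≤ (n:ℝ)-1) (by positivity : (0:ℝ) ≤ 12*((n:ℝ)+1)^3)]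
  nlinarith [h3, hlog, hn0]

lemma factorial_bound (r : ℕ) (hr : 1 ≤ r) :
    (r.factorial : ℝ) ≤ Real.exp (1 - r) * (r:ℝ) ^ ((r:ℝ) + 1/2) := by
  induction r with
  | zero => omega
  | succ n ih =>
    rcases Nat.eq_or_lt_of_le hr with h1 | h1
    · simp [← h1]
    · have hn : 1 ≤ n := by omega
      have ihn := ih hn
      have hn0 : (0:ℝ) < n := by exact_mod_cast hn
      have hn10 : (0:ℝ) < (n:ℝ) + 1 := by linarith
      -- key step : e * n^(n+1/2) ≤ (n+1)^(n+1/2)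
      have hkey : Real.exp 1 * (n:ℝ) ^ ((n:ℝ) + 1/2) ≤ ((n:ℝ)+1) ^ ((n:ℝ) + 1/2) := by
        have hratio : Real.exp 1 ≤ (((n:ℝ)+1)/n) ^ ((n:ℝ) + 1/2) := by
          rw [Real.rpow_def_of_pos (by positivity)]
          rw [← Real.exp_one_rpow (Real.log _ * _), Real.exp_one_rpow]
          apply Real.exp_le_exp.mpr
          calc (1:ℝ) ≤ ((n:ℝ) + 1/2) * Real.log (((n:ℝ)+1)/n) := key_ineq n hn
            _ = _ := by ring
        calc Real.exp 1 * (n:ℝ) ^ ((n:ℝ) + 1/2)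
            ≤ (((n:ℝ)+1)/n) ^ ((n:ℝ) + 1/2) * (n:ℝ) ^ ((n:ℝ) + 1/2) := by
              gcongr
          _ = ((n:ℝ)+1) ^ ((n:ℝ) + 1/2) := by
              rw [← Real.mul_rpow (by positivity) hn0.le]
              congr 1
              field_simp
      have cast1 : ((n+1).factorial : ℝ) = ((n:ℝ)+1) * (n.factorial : ℝ) := by
        rw [Nat.factorial_succ]; push_cast; ring
      rw [cast1]
      calc ((n:ℝ)+1) * (n.factorial : ℝ)
          ≤ ((n:ℝ)+1) * (Real.exp (1 - n) * (n:ℝ) ^ ((n:ℝ) + 1/2)) := by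
            gcongr
        _ = ((n:ℝ)+1) * Real.exp (-(n:ℝ)) * (Real.exp 1 * (n:ℝ) ^ ((n:ℝ) + 1/2)) := by
            rw [show (1:ℝ)-(n:ℝ) = 1 + -(n:ℝ) by ring, Real.exp_add]; ring
        _ ≤ ((n:ℝ)+1) * Real.exp (-(n:ℝ)) * (((n:ℝ)+1) ^ ((n:ℝ) + 1/2)) := by
            gcongr
        _ = Real.exp (1 - (↑(n+1):ℝ)) * ((↑(n+1):ℝ)) ^ ((↑(n+1):ℝ) + 1/2) := by
            have e1 : (1:ℝ) - (↑(n+1):ℝ) = -(n:ℝ) := by push_cast; ring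
            have e2 : ((↑(n+1):ℝ)) ^ ((↑(n+1):ℝ) + 1/2)
                = ((n:ℝ)+1) * ((n:ℝ)+1) ^ ((n:ℝ) + 1/2) := by
              have : ((↑(n+1):ℝ)) + 1/2 = 1 + ((n:ℝ) + 1/2) := by push_cast; ring
              rw [this, show ((↑(n+1):ℝ)) = (n:ℝ)+1 by push_cast; ring,
                Real.rpow_add hn10, Real.rpow_one]
            rw [e1, e2]; ring

/-- for `A, B ≥ 0` and every positive integer `r`,
`(A^r + B^r · r!)^{1/r} ≤ (A + B) · e^{1/r − 1} · r^{1 + 1/(2r)}`. -/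
theorem moment_combination_bound (A B : ℝ) (hA : 0 ≤ A) (hB : 0 ≤ B)
    (r : ℕ) (hr : 0 < r) :
    (A ^ r + B ^ r * (r.factorial : ℝ)) ^ ((1:ℝ) / r)
      ≤ (A + B) * Real.exp (1 / r - 1) * (r : ℝ) ^ ((1:ℝ) + 1 / (2 * r)) := by
  have hr1 : 1 ≤ r := hr
  have hr0 : (0:ℝ) < r := by exact_mod_cast hr
  have hfac1 : (1:ℝ) ≤ (r.factorial : ℝ) := by exact_mod_cast r.factorial_pos
  have hfac0 : (0:ℝ) ≤ (r.factorial : ℝ) := by positivity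
  have step1 : A ^ r + B ^ r * (r.factorial : ℝ) ≤ (A + B) ^ r * (r.factorial : ℝ) := by
    calc A ^ r + B ^ r * (r.factorial : ℝ)
        ≤ (A ^ r + B ^ r) * (r.factorial : ℝ) := by nlinarith [pow_nonneg hA r, pow_nonneg hB r]
      _ ≤ (A + B) ^ r * (r.factorial : ℝ) := by
          gcongr
          exact pow_add_pow_le hA hB hr.ne'
  have hLHS0 : (0:ℝ) ≤ A ^ r + B ^ r * (r.factorial : ℝ) := by positivity
  have step2 := Real.rpow_le_rpow hLHS0 step1 (by positivity : (0:ℝ) ≤ (1:ℝ)/r)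
  refine step2.trans ?_
  have hAB : (0:ℝ) ≤ A + B := by linarith
  rw [Real.mul_rpow (by positivity) hfac0]
  have e1 : ((A + B) ^ r) ^ ((1:ℝ)/r) = A + B := by
    rw [← Real.rpow_natCast (A+B) r, ← Real.rpow_mul hAB, mul_one_div, div_self hr0.ne',
      Real.rpow_one]
  rw [e1]
  rw [mul_assoc]
  gcongr
  -- (r!)^(1/r) ≤ exp(1/r - 1) * r^(1 + 1/(2r))
  calc ((r.factorial : ℝ)) ^ ((1:ℝ)/r)
      ≤ (Real.exp (1 - r) * (r:ℝ) ^ ((r:ℝ) + 1/2)) ^ ((1:ℝ)/r) :=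
        Real.rpow_le_rpow hfac0 (factorial_bound r hr1) (by positivity)
    _ = Real.exp (1/r - 1) * (r : ℝ) ^ ((1:ℝ) + 1 / (2 * r)) := by
        rw [Real.mul_rpow (Real.exp_nonneg _) (Real.rpow_nonneg hr0.le _),
          ← Real.exp_mul, ← Real.rpow_mul hr0.le]
        congr 1
        · congr 1
          field_simp
        · congr 1
          field_simp
end
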